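/- The function g(G₀) = Σ_{n=1}^{N} (−1)^{n+1}·C(N,n)·1/(1 + c·(n/G₀)^{2/α}) with constants c > 0, α > 2 and positive integer N is monotonically increasing in G₀ > 0, and monotonically decreasing in c. -/

import Mathlib

open Real Finset

namespace CovAux


/-- `m`-th derivative of `x ^ β` on `(0,∞)`. -/
noncomputable def phi (β : ℝ) (m : ℕ) : ℝ → ℝ :=
  fun x => (∏ i ∈ range m, (β - i)) * x ^ (β - m)

lemma phi_hasDerivAt (β : ℝ) (m : ℕ) {x : ℝ} (hx : 0 < x) :
    HasDerivAt (phi β m) (phi β (m + 1) x) x := by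
  have h : HasDerivAt (fun x : ℝ => x ^ (β - m)) ((β - m) * x ^ (β - m - 1)) x :=
    Real.hasDerivAt_rpow_const (Or.inl hx.ne')
  have h2 : HasDerivAt (phi β m)
      ((∏ i ∈ range m, (β - i)) * ((β - m) * x ^ (β - m - 1))) x :=
    h.const_mul (∏ i ∈ range m, (β - i))
  convert h2 using 1
  unfold phi
  rw [Finset.prod_range_succ, show (β - ((m : ℕ) + 1 : ℕ)) = β - m - 1 by push_cast; ring]
  ring

lemma phi_sign {β : ℝ} (hβ0 : 0 < β) (hβ1 : β < 1) (m : ℕ) {x : ℝ} (hx : 0 < x) :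
    0 ≤ (-1 : ℝ) ^ m * phi β (m + 1) x := by
  have hprod : 0 ≤ (-1 : ℝ) ^ m * ∏ i ∈ range (m + 1), (β - i) := by
    induction m with
    | zero => simpa using hβ0.le
    | succ m ih =>
      have : ((-1 : ℝ) ^ (m + 1) * ∏ i ∈ range (m + 2), (β - i))
          = ((-1 : ℝ) ^ m * ∏ i ∈ range (m + 1), (β - i)) * ((m + 1 : ℝ) - β) := by
        rw [Finset.prod_range_succ]
        push_cast
        ring
      rw [this]
      exact mul_nonneg ih (by linarith [(by exact_mod_cast Nat.one_le_iff_ne_zero.2 (Nat.succ_ne_zero m) : (1:ℝ) ≤ (m+1:ℝ))])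
  have hxp : (0 : ℝ) ≤ x ^ (β - (m + 1 : ℕ)) := (Real.rpow_pos_of_pos hx _).le
  unfold phi
  calc (0:ℝ) ≤ ((-1 : ℝ) ^ m * ∏ i ∈ range (m + 1), (β - i)) * x ^ (β - (m + 1 : ℕ)) :=
        mul_nonneg hprod hxp
    _ = (-1 : ℝ) ^ m * ((∏ i ∈ range (m + 1), (β - i)) * x ^ (β - (m + 1 : ℕ))) := by ring




noncomputable def F (β : ℝ) : ℝ → ℝ := fun x => (1 + x ^ β)⁻¹

noncomputable def A (β : ℝ) (k : ℕ) : ℝ → ℝ := iteratedDerivWithin k (F β) (Set.Ioi 0)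

lemma one_add_rpow_pos {β x : ℝ} (hx : 0 < x) : 0 < 1 + x ^ β := by
  have := Real.rpow_pos_of_pos hx β
  linarith

lemma contDiffOn_F (β : ℝ) (n : ℕ) : ContDiffOn ℝ n (F β) (Set.Ioi 0) := by
  have h1 : ContDiffOn ℝ n (fun x : ℝ => 1 + x ^ β) (Set.Ioi 0) := by
    refine contDiffOn_const.add fun x hx => ?_
    exact (Real.contDiffAt_rpow_const_of_ne (ne_of_gt hx)).contDiffWithinAt
  exact h1.inv fun x hx => (one_add_rpow_pos hx).ne'

lemma A_zero (β : ℝ) : A β 0 = F β := iteratedDerivWithin_zero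

lemma A_hasDerivAt (β : ℝ) (k : ℕ) {x : ℝ} (hx : 0 < x) :
    HasDerivAt (A β k) (A β (k + 1) x) x := by
  have hmem : x ∈ Set.Ioi (0:ℝ) := hx
  have hdiff : DifferentiableAt ℝ (A β k) x := by
    have h := (contDiffOn_F β (k + 1)).differentiableOn_iteratedDerivWithin
      (by exact_mod_cast Nat.lt_succ_self k) (uniqueDiffOn_Ioi 0)
    exact (h x hmem).differentiableAt (isOpen_Ioi.mem_nhds hmem)
  have hval : A β (k + 1) x = deriv (A β k) x := by
    show iteratedDerivWithin (k+1) (F β) (Set.Ioi 0) x = _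
    rw [iteratedDerivWithin_succ,
      derivWithin_of_isOpen isOpen_Ioi hmem]
    rfl
  rw [hval]
  exact hdiff.hasDerivAt

lemma one_add_hasDerivAt (β : ℝ) {x : ℝ} (hx : 0 < x) :
    HasDerivAt (fun x : ℝ => 1 + x ^ β) (phi β 1 x) x := by
  have h : HasDerivAt (fun x : ℝ => x ^ β) (β * x ^ (β - 1)) x :=
    Real.hasDerivAt_rpow_const (Or.inl hx.ne')
  have : HasDerivAt (fun x : ℝ => 1 + x ^ β) (0 + β * x ^ (β - 1)) x :=
    (hasDerivAt_const x (1:ℝ)).add h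
  convert this using 1
  unfold phi
  simp

lemma F_hasDerivAt (β : ℝ) {x : ℝ} (hx : 0 < x) :
    HasDerivAt (F β) (-(phi β 1 x) / (1 + x ^ β) ^ 2) x :=
  (one_add_hasDerivAt β hx).inv (one_add_rpow_pos hx).ne'

lemma A_one (β : ℝ) {x : ℝ} (hx : 0 < x) :
    A β 1 x = -(phi β 1 x) / (1 + x ^ β) ^ 2 := by
  have h1 : HasDerivAt (A β 0) (A β 1 x) x := A_hasDerivAt β 0 hx
  rw [A_zero] at h1
  exact h1.unique (F_hasDerivAt β hx)



lemma pascal_sum (a p : ℕ → ℝ) (k : ℕ) :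
    ∑ j ∈ range (k+1), ((k+1).choose j : ℝ) * a j * p (k+1-j)
      = p 1 * a k + ∑ j ∈ range k, (k.choose j : ℝ) * (a (j+1) * p (k-j) + a j * p (k-j+1)) := by
  have h1 : ∑ j ∈ range (k+1), ((k+1).choose j : ℝ) * a j * p (k+1-j)
      = (∑ j ∈ range k, ((k+1).choose (j+1) : ℝ) * a (j+1) * p (k-j)) + a 0 * p (k+1) := by
    rw [Finset.sum_range_succ']
    simp [Nat.succ_sub_succ]
  have h2 : ∑ j ∈ range k, ((k+1).choose (j+1) : ℝ) * a (j+1) * p (k-j)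
      = ∑ j ∈ range k, ((k.choose j : ℝ) * a (j+1) * p (k-j)
          + (k.choose (j+1) : ℝ) * a (j+1) * p (k-j)) := by
    refine Finset.sum_congr rfl fun j hj => ?_
    rw [Nat.choose_succ_succ]
    push_cast
    ring
  have e1 : ∑ i ∈ range (k+1), (k.choose i : ℝ) * a i * p (k+1-i)
      = (∑ j ∈ range k, (k.choose (j+1):ℝ) * a (j+1) * p (k-j)) + a 0 * p (k+1) := by
    rw [Finset.sum_range_succ']
    simp [Nat.succ_sub_succ]
  have e2 : ∑ i ∈ range (k+1), (k.choose i : ℝ) * a i * p (k+1-i)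
      = (∑ i ∈ range k, (k.choose i : ℝ) * a i * p (k-i+1)) + a k * p 1 := by
    rw [Finset.sum_range_succ]
    rw [show k + 1 - k = 1 by omega]
    simp only [Nat.choose_self, Nat.cast_one, one_mul]
    congr 1
    refine Finset.sum_congr rfl fun i hi => ?_
    have hik : k + 1 - i = k - i + 1 := by have := Finset.mem_range.1 hi; omega
    rw [hik]
  have h3 : ∑ j ∈ range k, (k.choose (j+1):ℝ) * a (j+1) * p (k-j)
      = (∑ i ∈ range k, (k.choose i : ℝ) * a i * p (k-i+1)) + a k * p 1 - a 0 * p (k+1) := by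
    linarith [e1, e2]
  rw [h1, h2, Finset.sum_add_distrib, h3]
  simp only [mul_add, Finset.sum_add_distrib, mul_assoc]
  ring


lemma key_identity (β : ℝ) : ∀ k : ℕ, 1 ≤ k → ∀ x : ℝ, 0 < x →
    (1 + x ^ β) * A β k x
      + ∑ j ∈ range k, (k.choose j : ℝ) * (A β j x * phi β (k - j) x) = 0 := by
  intro k hk
  induction k, hk using Nat.le_induction with
  | base =>
    intro x hx
    have hD := one_add_rpow_pos (β := β) hx
    rw [Finset.sum_range_one, A_one β hx, A_zero]
    show (1 + x ^ β) * (-(phi β 1 x) / (1 + x ^ β) ^ 2)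
        + (Nat.choose 1 0 : ℝ) * ((1 + x ^ β)⁻¹ * phi β (1 - 0) x) = 0
    simp only [Nat.choose_zero_right, Nat.cast_one, one_mul, Nat.sub_zero]
    field_simp
    ring
  | succ k hk IH =>
    intro x hx
    have hL : HasDerivAt
        (fun y => (1 + y ^ β) * A β k y
          + ∑ j ∈ range k, (k.choose j : ℝ) * (A β j y * phi β (k - j) y))
        (phi β 1 x * A β k x + (1 + x ^ β) * A β (k + 1) x
          + ∑ j ∈ range k, (k.choose j : ℝ) *
              (A β (j + 1) x * phi β (k - j) x + A β j x * phi β (k - j + 1) x)) x := by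
      have h1 := (one_add_hasDerivAt β hx).mul (A_hasDerivAt β k hx)
      have h2 : HasDerivAt
          (fun y => ∑ j ∈ range k, (k.choose j : ℝ) * (A β j y * phi β (k - j) y))
          (∑ j ∈ range k, (k.choose j : ℝ) *
              (A β (j + 1) x * phi β (k - j) x + A β j x * phi β (k - j + 1) x)) x := by
        refine HasDerivAt.fun_sum fun j hj => ?_
        exact ((A_hasDerivAt β j hx).mul (phi_hasDerivAt β (k - j) hx)).const_mul _
      exact h1.add h2
    have hzero : HasDerivAt
        (fun y => (1 + y ^ β) * A β k y
          + ∑ j ∈ range k, (k.choose j : ℝ) * (A β j y * phi β (k - j) y)) 0 x := by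
      have hev : (fun y => (1 + y ^ β) * A β k y
          + ∑ j ∈ range k, (k.choose j : ℝ) * (A β j y * phi β (k - j) y))
            =ᶠ[nhds x] fun _ => (0 : ℝ) := by
        filter_upwards [isOpen_Ioi.mem_nhds (Set.mem_Ioi.2 hx)] with y hy
        exact IH y hy
      exact (hasDerivAt_const x (0 : ℝ)).congr_of_eventuallyEq hev
    have hder0 := hL.unique hzero
    have P := pascal_sum (fun j => A β j x) (fun m => phi β m x) k
    simp only [mul_assoc] at P
    rw [P]
    linarith [hder0]

lemma A_sign {β : ℝ} (hβ0 : 0 < β) (hβ1 : β < 1) (k : ℕ) {x : ℝ} (hx : 0 < x) :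
    0 ≤ (-1 : ℝ) ^ k * A β k x := by
  induction k using Nat.strong_induction_on with
  | _ k IH =>
    obtain _ | m := k
    · rw [pow_zero, one_mul, A_zero]
      exact inv_nonneg.2 (one_add_rpow_pos hx).le
    · have hid := key_identity β (m + 1) (Nat.le_add_left 1 m) x hx
      have hterm : ∀ j ∈ range (m + 1),
          0 ≤ (-1 : ℝ) ^ (m + 1) *
            -(((m + 1).choose j : ℝ) * (A β j x * phi β (m + 1 - j) x)) := by
        intro j hj
        have hj' : j < m + 1 := Finset.mem_range.1 hj
        obtain ⟨q, hq⟩ : ∃ q, m + 1 - j = q + 1 := ⟨m - j, by omega⟩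
        have hmj : m + 1 = j + (q + 1) := by omega
        have hpow : (-1 : ℝ) ^ (m + 1) = (-1) ^ j * (-1) ^ q * (-1) := by
          rw [hmj, pow_add, pow_add, pow_one]
          ring
        rw [hq, hpow]
        have h1 : 0 ≤ (-1 : ℝ) ^ j * A β j x := IH j hj'
        have h2 : 0 ≤ (-1 : ℝ) ^ q * phi β (q + 1) x := phi_sign hβ0 hβ1 q hx
        have h3 : (0 : ℝ) ≤ ((m + 1).choose j : ℝ) := Nat.cast_nonneg _
        calc (0 : ℝ) ≤ ((m + 1).choose j : ℝ) *
              (((-1 : ℝ) ^ j * A β j x) * ((-1 : ℝ) ^ q * phi β (q + 1) x)) :=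
              mul_nonneg h3 (mul_nonneg h1 h2)
          _ = (-1 : ℝ) ^ j * (-1) ^ q * (-1) *
              -(((m + 1).choose j : ℝ) * (A β j x * phi β (q + 1) x)) := by ring
      have hsum := Finset.sum_nonneg hterm
      have key : ∑ j ∈ range (m + 1), (-1 : ℝ) ^ (m + 1) *
            -(((m + 1).choose j : ℝ) * (A β j x * phi β (m + 1 - j) x))
          = (-1 : ℝ) ^ (m + 1) * ((1 + x ^ β) * A β (m + 1) x) := by
        rw [← Finset.mul_sum, Finset.sum_neg_distrib]
        congr 1
        linarith [hid]
      rw [key] at hsum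
      nlinarith [one_add_rpow_pos (β := β) hx, hsum]



def Fam (Af : ℕ → ℝ → ℝ) : Prop :=
  (∀ k x, 0 < x → HasDerivAt (Af k) (Af (k + 1) x) x) ∧
  (∀ k x, 0 < x → 0 ≤ (-1 : ℝ) ^ k * Af k x)

lemma Fam.anti {Af : ℕ → ℝ → ℝ} (hA : Fam Af) (k : ℕ) {x y : ℝ}
    (hx : 0 < x) (hxy : x ≤ y) :
    (-1 : ℝ) ^ k * Af k y ≤ (-1 : ℝ) ^ k * Af k x := by
  rcases eq_or_lt_of_le hxy with rfl | hlt
  · exact le_refl _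
  · obtain ⟨c, hc, hceq⟩ := exists_hasDerivAt_eq_slope
      (fun t => (-1 : ℝ) ^ k * Af k t) (fun t => (-1 : ℝ) ^ k * Af (k + 1) t) hlt
      (fun t ht => (((hA.1 k t (lt_of_lt_of_le hx ht.1)).const_mul
        ((-1 : ℝ) ^ k)).continuousAt).continuousWithinAt)
      (fun t ht => (hA.1 k t (hx.trans ht.1)).const_mul _)
    have hc0 : 0 < c := hx.trans hc.1
    have hsign : (-1 : ℝ) ^ k * Af (k + 1) c ≤ 0 := by
      have h1 := hA.2 (k + 1) c hc0
      have h2 : (-1 : ℝ) ^ (k + 1) = -(-1 : ℝ) ^ k := by ring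
      rw [h2] at h1
      linarith
    rw [hceq] at hsign
    have hyx : 0 < y - x := sub_pos.2 hlt
    have := mul_nonpos_of_nonpos_of_nonneg hsign hyx.le
    rw [div_mul_cancel₀] at this
    · linarith
    · exact hyx.ne'

lemma Fam.diff {Af : ℕ → ℝ → ℝ} (hA : Fam Af) {h : ℝ} (hh : 0 < h) :
    Fam (fun k x => Af k x - Af k (x + h)) := by
  constructor
  · intro k x hx
    exact (hA.1 k x hx).sub
      (HasDerivAt.comp_add_const x h (hA.1 k (x + h) (by linarith)))
  · intro k x hx
    have h1 := hA.anti k hx (le_add_of_nonneg_right hh.le)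
    have h2 : (-1 : ℝ) ^ k * (Af k x - Af k (x + h))
        = (-1 : ℝ) ^ k * Af k x - (-1 : ℝ) ^ k * Af k (x + h) := by ring
    rw [h2]
    linarith

lemma alt_step (f : ℝ → ℝ) (K : ℕ) (x h : ℝ) :
    ∑ m ∈ range (K + 2), (-1 : ℝ) ^ m * (((K + 1).choose m : ℝ) * f (x + m * h))
      = ∑ m ∈ range (K + 1),
          (-1 : ℝ) ^ m * ((K.choose m : ℝ) * (f (x + m * h) - f (x + m * h + h))) := by
  have hR : ∑ m ∈ range (K + 1),
        (-1 : ℝ) ^ m * ((K.choose m : ℝ) * (f (x + m * h) - f (x + m * h + h)))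
      = (∑ m ∈ range (K + 1), (-1 : ℝ) ^ m * ((K.choose m : ℝ) * f (x + m * h)))
        - ∑ m ∈ range (K + 1), (-1 : ℝ) ^ m * ((K.choose m : ℝ) * f (x + m * h + h)) := by
    rw [← Finset.sum_sub_distrib]
    exact Finset.sum_congr rfl fun m hm => by ring
  have hL : ∑ m ∈ range (K + 2), (-1 : ℝ) ^ m * (((K + 1).choose m : ℝ) * f (x + m * h))
      = (∑ m ∈ range (K + 1),
          (-((-1 : ℝ) ^ m * ((K.choose m : ℝ) * f (x + m * h + h)))
            - (-1 : ℝ) ^ m * ((K.choose (m + 1) : ℝ) * f (x + m * h + h)))) + f x := by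
    rw [Finset.sum_range_succ' _ (K + 1)]
    congr 1
    · refine Finset.sum_congr rfl fun m hm => ?_
      rw [Nat.choose_succ_succ]
      push_cast
      rw [show x + ((m : ℝ) + 1) * h = x + m * h + h by ring]
      ring
    · simp
  have e1 : ∑ m ∈ range (K + 2), (-1 : ℝ) ^ m * ((K.choose m : ℝ) * f (x + m * h))
      = ∑ m ∈ range (K + 1), (-1 : ℝ) ^ m * ((K.choose m : ℝ) * f (x + m * h)) := by
    rw [Finset.sum_range_succ]
    simp [Nat.choose_succ_self]
  have e2 : ∑ m ∈ range (K + 2), (-1 : ℝ) ^ m * ((K.choose m : ℝ) * f (x + m * h))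
      = (∑ m ∈ range (K + 1),
          -((-1 : ℝ) ^ m * ((K.choose (m + 1) : ℝ) * f (x + m * h + h)))) + f x := by
    rw [Finset.sum_range_succ' _ (K + 1)]
    congr 1
    · refine Finset.sum_congr rfl fun m hm => ?_
      push_cast
      rw [show x + ((m : ℝ) + 1) * h = x + m * h + h by ring]
      ring
    · simp
  rw [hL, hR, Finset.sum_sub_distrib, Finset.sum_neg_distrib]
  rw [Finset.sum_neg_distrib] at e2
  linarith [e1, e2]

lemma Fam.alt_sum (K : ℕ) {h : ℝ} (hh : 0 < h) :
    ∀ (Af : ℕ → ℝ → ℝ), Fam Af → ∀ {x : ℝ}, 0 < x →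
    0 ≤ ∑ m ∈ range (K + 1), (-1 : ℝ) ^ m * ((K.choose m : ℝ) * Af 0 (x + m * h)) := by
  induction K with
  | zero =>
    intro Af hA x hx
    simpa using hA.2 0 x hx
  | succ K IH =>
    intro Af hA x hx
    have hB := hA.diff hh
    have h1 := IH _ hB hx
    rw [alt_step]
    refine le_trans h1 (le_of_eq ?_)
    exact Finset.sum_congr rfl fun m hm => rfl

lemma g_anti {β : ℝ} (hβ0 : 0 < β) (hβ1 : β < 1) (N : ℕ) (hN : 0 < N) :
    AntitoneOn (fun lam : ℝ => ∑ n ∈ Finset.Icc 1 N,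
      (-1 : ℝ) ^ (n + 1) * (N.choose n : ℝ) * A β 0 (lam * n)) (Set.Ioi 0) := by
  obtain ⟨P, rfl⟩ : ∃ P, N = P + 1 := ⟨N - 1, by omega⟩
  have hF : Fam (A β) :=
    ⟨fun k x hx => A_hasDerivAt β k hx, fun k x hx => A_sign hβ0 hβ1 k hx⟩
  have hder : ∀ lam : ℝ, 0 < lam → HasDerivAt
      (fun lam : ℝ => ∑ n ∈ Finset.Icc 1 (P + 1),
        (-1 : ℝ) ^ (n + 1) * ((P + 1).choose n : ℝ) * A β 0 (lam * n))
      (∑ n ∈ Finset.Icc 1 (P + 1),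
        (-1 : ℝ) ^ (n + 1) * ((P + 1).choose n : ℝ) * (A β 1 (lam * n) * n)) lam := by
    intro lam hlam
    refine HasDerivAt.fun_sum fun n hn => ?_
    have hn1 : 1 ≤ n := (Finset.mem_Icc.1 hn).1
    have hnr : (1 : ℝ) ≤ (n : ℝ) := by exact_mod_cast hn1
    have hpos : 0 < lam * (n : ℝ) := by nlinarith
    exact ((hF.1 0 (lam * (n : ℝ)) hpos).comp lam
      (hasDerivAt_mul_const (n : ℝ))).const_mul _
  have hDle : ∀ lam : ℝ, 0 < lam →
      (∑ n ∈ Finset.Icc 1 (P + 1),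
        (-1 : ℝ) ^ (n + 1) * ((P + 1).choose n : ℝ) * (A β 1 (lam * n) * n)) ≤ 0 := by
    intro lam hlam
    have hBf : Fam (fun k x => -(A β (k + 1) x)) := by
      constructor
      · intro k x hx
        exact (hF.1 (k + 1) x hx).neg
      · intro k x hx
        have h1 := hF.2 (k + 1) x hx
        have hp : (-1 : ℝ) ^ (k + 1) = -(-1 : ℝ) ^ k := by ring
        rw [hp] at h1
        simpa using h1
    have halt := Fam.alt_sum P hlam _ hBf hlam
    have hereindex : (∑ n ∈ Finset.Icc 1 (P + 1),
          (-1 : ℝ) ^ (n + 1) * ((P + 1).choose n : ℝ) * (A β 1 (lam * n) * n))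
        = ((P : ℝ) + 1) * ∑ m ∈ range (P + 1),
            -((-1 : ℝ) ^ m * ((P.choose m : ℝ) * -(A β 1 (lam + m * lam)))) := by
      rw [← Finset.Ico_add_one_right_eq_Icc, Finset.sum_Ico_eq_sum_range, Finset.mul_sum]
      rw [show P + 1 + 1 - 1 = P + 1 by omega]
      refine Finset.sum_congr rfl fun m hm => ?_
      have hch : ((P + 1).choose (m + 1) : ℝ) * ((m : ℝ) + 1)
          = ((P : ℝ) + 1) * (P.choose m : ℝ) := by
        exact_mod_cast (Nat.add_one_mul_choose_eq P m).symm
      rw [show 1 + m = m + 1 by omega]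
      push_cast
      rw [show lam * ((m : ℝ) + 1) = lam + m * lam by ring]
      linear_combination ((-1 : ℝ) ^ m * (-1) ^ 2 * A β 1 (lam + m * lam)) * hch
    rw [hereindex]
    have hneg : ∑ m ∈ range (P + 1),
        -((-1 : ℝ) ^ m * ((P.choose m : ℝ) * -(A β 1 (lam + m * lam)))) ≤ 0 := by
      rw [Finset.sum_neg_distrib]
      linarith [halt]
    have hP1 : (0 : ℝ) ≤ (P : ℝ) + 1 := by positivity
    exact mul_nonpos_of_nonneg_of_nonpos hP1 hneg
  refine antitoneOn_of_deriv_nonpos (convex_Ioi 0) ?_ ?_ ?_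
  · intro lam hlam
    exact (hder lam hlam).continuousAt.continuousWithinAt
  · intro lam hlam
    rw [interior_Ioi] at hlam
    exact (hder lam hlam).differentiableAt.differentiableWithinAt
  · intro lam hlam
    rw [interior_Ioi] at hlam
    rw [(hder lam hlam).deriv]
    exact hDle lam hlam

lemma A_zero_apply {β : ℝ} (x : ℝ) : A β 0 x = (1 + x ^ β)⁻¹ := by
  rw [A_zero]; rfl

end CovAux

open CovAux in
/-- The closed-form coverage lower bound
`g(G₀) = Σ_{n=1}^N (-1)^{n+1} C(N,n) / (1 + c (n/G₀)^{2/α})`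
is monotonically increasing in the directivity gain `G₀ > 0` and monotonically
decreasing in the constant `c > 0`. -/
theorem coverage_bound_monotone (N : ℕ) (hN : 0 < N) (α : ℝ) (hα : 2 < α) :
    (∀ c : ℝ, 0 < c →
      MonotoneOn (fun G₀ : ℝ =>
        ∑ n ∈ Icc 1 N, (-1 : ℝ) ^ (n + 1) * (N.choose n) *
          (1 / (1 + c * ((n : ℝ) / G₀) ^ (2 / α)))) (Set.Ioi (0 : ℝ))) ∧
    (∀ G₀ : ℝ, 0 < G₀ →
      AntitoneOn (fun c : ℝ =>
        ∑ n ∈ Icc 1 N, (-1 : ℝ) ^ (n + 1) * (N.choose n) *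
          (1 / (1 + c * ((n : ℝ) / G₀) ^ (2 / α)))) (Set.Ioi (0 : ℝ))) := by
  have hα0 : (0 : ℝ) < α := by linarith
  set β : ℝ := 2 / α with hβ
  have hβ0 : 0 < β := by positivity
  have hβ1 : β < 1 := by
    rw [hβ, div_lt_one hα0]
    exact hα
  have hg := g_anti hβ0 hβ1 N hN
  -- the pointwise identification
  have hkey : ∀ c G : ℝ, 0 < c → 0 < G → ∀ n ∈ Icc 1 N,
      (-1 : ℝ) ^ (n + 1) * (N.choose n) * (1 / (1 + c * ((n : ℝ) / G) ^ β))
        = (-1 : ℝ) ^ (n + 1) * (N.choose n : ℝ) * A β 0 ((c ^ β⁻¹ / G) * n) := by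
    intro c G hc hG n _
    have harg : (c ^ β⁻¹ / G) * (n : ℝ) = c ^ β⁻¹ * ((n : ℝ) / G) := by ring
    have hrp : ((c ^ β⁻¹ / G) * (n : ℝ)) ^ β = c * ((n : ℝ) / G) ^ β := by
      rw [harg, Real.mul_rpow (Real.rpow_nonneg hc.le _)
        (div_nonneg (Nat.cast_nonneg n) hG.le), ← Real.rpow_mul hc.le,
        inv_mul_cancel₀ (ne_of_gt hβ0), Real.rpow_one]
    rw [A_zero_apply, hrp, one_div]
  constructor
  · intro c hc
    intro G₁ hG₁ G₂ hG₂ hle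
    have hG₁' : (0 : ℝ) < G₁ := hG₁
    have hG₂' : (0 : ℝ) < G₂ := hG₂
    have hcpos : (0 : ℝ) < c ^ β⁻¹ := Real.rpow_pos_of_pos hc _
    have hl1 : c ^ β⁻¹ / G₁ ∈ Set.Ioi (0 : ℝ) := by
      simp only [Set.mem_Ioi]; positivity
    have hl2 : c ^ β⁻¹ / G₂ ∈ Set.Ioi (0 : ℝ) := by
      simp only [Set.mem_Ioi]; positivity
    have hll : c ^ β⁻¹ / G₂ ≤ c ^ β⁻¹ / G₁ := by gcongr
    have h := hg hl2 hl1 hll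
    calc ∑ n ∈ Icc 1 N, (-1 : ℝ) ^ (n + 1) * (N.choose n) *
          (1 / (1 + c * ((n : ℝ) / G₁) ^ β))
        = ∑ n ∈ Icc 1 N, (-1 : ℝ) ^ (n + 1) * (N.choose n : ℝ)
            * A β 0 ((c ^ β⁻¹ / G₁) * n) :=
          Finset.sum_congr rfl (hkey c G₁ hc hG₁')
      _ ≤ ∑ n ∈ Icc 1 N, (-1 : ℝ) ^ (n + 1) * (N.choose n : ℝ)
            * A β 0 ((c ^ β⁻¹ / G₂) * n) := h
      _ = ∑ n ∈ Icc 1 N, (-1 : ℝ) ^ (n + 1) * (N.choose n) *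
            (1 / (1 + c * ((n : ℝ) / G₂) ^ β)) :=
          (Finset.sum_congr rfl (hkey c G₂ hc hG₂')).symm
  · intro G hG
    intro c₁ hc₁ c₂ hc₂ hle
    have hc₁' : (0 : ℝ) < c₁ := hc₁
    have hc₂' : (0 : ℝ) < c₂ := hc₂
    have hl1 : c₁ ^ β⁻¹ / G ∈ Set.Ioi (0 : ℝ) := by
      simp only [Set.mem_Ioi]
      have := Real.rpow_pos_of_pos hc₁' β⁻¹
      positivity
    have hl2 : c₂ ^ β⁻¹ / G ∈ Set.Ioi (0 : ℝ) := by
      simp only [Set.mem_Ioi]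
      have := Real.rpow_pos_of_pos hc₂' β⁻¹
      positivity
    have hll : c₁ ^ β⁻¹ / G ≤ c₂ ^ β⁻¹ / G :=
      (div_le_div_iff_of_pos_right hG).2 (Real.rpow_le_rpow hc₁'.le hle (inv_nonneg.2 hβ0.le))
    have h := hg hl1 hl2 hll
    calc ∑ n ∈ Icc 1 N, (-1 : ℝ) ^ (n + 1) * (N.choose n) *
          (1 / (1 + c₂ * ((n : ℝ) / G) ^ β))
        = ∑ n ∈ Icc 1 N, (-1 : ℝ) ^ (n + 1) * (N.choose n : ℝ)
            * A β 0 ((c₂ ^ β⁻¹ / G) * n) :=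
          Finset.sum_congr rfl (hkey c₂ G hc₂' hG)
      _ ≤ ∑ n ∈ Icc 1 N, (-1 : ℝ) ^ (n + 1) * (N.choose n : ℝ)
            * A β 0 ((c₁ ^ β⁻¹ / G) * n) := h
      _ = ∑ n ∈ Icc 1 N, (-1 : ℝ) ^ (n + 1) * (N.choose n) *
            (1 / (1 + c₁ * ((n : ℝ) / G) ^ β)) :=
          (Finset.sum_congr rfl (hkey c₁ G hc₁' hG)).symm
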